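/- Let (X,d) be a metric space and μ a Borel measure on X that is finite on every bounded Borel set and positive on every nonempty open set, and let 1 ≤ p < ∞. If there is a constant C > 0 such that for every r > 0 and every f ∈ L^p(μ) one has ‖A_r f‖_{L^p(μ)} ≤ C ‖f‖_{L^p(μ)}, then for every f ∈ L^p(μ) the averages A_r f converge to f in L^p(μ) as r → 0. -/

import Mathlib

open MeasureTheory Metric Filter Topology ENNReal

/-- The averaging operator `A_r f(x) = (1/μ(B^cl(x,r))) ∫_{B^cl(x,r)} f dμ`
over closed balls. -/
noncomputable def avgOp {X : Type*} [MetricSpace X] [MeasurableSpace X]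
    (μ : Measure X) (r : ℝ) (f : X → ℝ) (x : X) : ℝ :=
  (μ (closedBall x r)).toReal⁻¹ * ∫ y in closedBall x r, f y ∂μ

section Aux

variable {X : Type*} [MetricSpace X] [MeasurableSpace X] [BorelSpace X]

lemma aux_iInter_closedBall (x : X) (r : ℝ) :
    ⋂ n : ℕ, closedBall x (r + 1 / (n + 1)) = closedBall x r := by
  ext y
  simp only [Set.mem_iInter, mem_closedBall]
  constructor
  · intro h
    have hlim : Tendsto (fun n : ℕ => r + 1 / ((n : ℝ) + 1)) atTop (𝓝 (r + 0)) :=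
      tendsto_const_nhds.add tendsto_one_div_add_atTop_nhds_zero_nat
    rw [add_zero] at hlim
    exact ge_of_tendsto' hlim h
  · intro h n
    have h0 : (0:ℝ) < 1 / ((n : ℝ) + 1) := by positivity
    linarith

lemma aux_measurable_measure_closedBall (ν : Measure X)
    (hν : ∀ (x : X) (R : ℝ), ν (closedBall x R) < ⊤) (r : ℝ) :
    Measurable fun x => ν (closedBall x r) := by
  refine UpperSemicontinuous.measurable ?_
  intro x y hy
  have h1 : Tendsto (fun n : ℕ => ν (closedBall x (r + 1 / (n + 1)))) atTop
      (𝓝 (ν (closedBall x r))) := by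
    have h2 := tendsto_measure_iInter_atTop (μ := ν)
      (s := fun n : ℕ => closedBall x (r + 1 / (n + 1)))
      (fun _ => measurableSet_closedBall.nullMeasurableSet)
      (fun m n hmn => closedBall_subset_closedBall (by
        have hc : (m : ℝ) ≤ (n : ℝ) := Nat.cast_le.mpr hmn
        have : 1 / ((n:ℝ)+1) ≤ 1 / ((m:ℝ)+1) := by
          apply one_div_le_one_div_of_le (by positivity)
          linarith
        linarith))
      ⟨0, (hν _ _).ne⟩
    rwa [aux_iInter_closedBall] at h2
  obtain ⟨n, hn⟩ := (h1.eventually_lt_const hy).exists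
  filter_upwards [ball_mem_nhds x (show (0:ℝ) < 1 / (n + 1) by positivity)] with x' hx'
  refine lt_of_le_of_lt (measure_mono ?_) hn
  apply closedBall_subset_closedBall'
  have hd : dist x' x < 1 / ((n:ℝ) + 1) := mem_ball.mp hx'
  linarith

lemma aux_integrableOn {μ : Measure X} {p : ℝ≥0∞} (hp1 : 1 ≤ p) {f : X → ℝ}
    (hf : MemLp f p μ) {s : Set X} (hs : μ s ≠ ⊤) : IntegrableOn f s μ := by
  haveI : IsFiniteMeasure (μ.restrict s) :=
    ⟨by rwa [Measure.restrict_apply_univ, lt_top_iff_ne_top]⟩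
  exact (hf.restrict s).integrable hp1

lemma aux_measurable_avgOp {μ : Measure X}
    (hfin : ∀ s : Set X, Bornology.IsBounded s → μ s < ⊤)
    {f : X → ℝ} (hint : ∀ (x : X) (R : ℝ), IntegrableOn f (closedBall x R) μ) (r : ℝ) :
    Measurable (avgOp μ r f) := by
  have hμb : ∀ (x : X) (R : ℝ), μ (closedBall x R) < ⊤ :=
    fun x R => hfin _ isBounded_closedBall
  set ν₁ := μ.withDensity fun y => ENNReal.ofReal (f y) with hν₁
  set ν₂ := μ.withDensity fun y => ENNReal.ofReal (-f y) with hν₂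
  have hb : ∀ g : X → ℝ, (∀ y, ENNReal.ofReal (g y) ≤ (‖f y‖₊ : ℝ≥0∞)) →
      ∀ (x : X) (R : ℝ),
      μ.withDensity (fun y => ENNReal.ofReal (g y)) (closedBall x R) < ⊤ := by
    intro g hg x R
    rw [withDensity_apply _ measurableSet_closedBall]
    calc ∫⁻ y in closedBall x R, ENNReal.ofReal (g y) ∂μ
        ≤ ∫⁻ y in closedBall x R, (‖f y‖₊ : ℝ≥0∞) ∂μ := lintegral_mono fun y => hg y
      _ < ⊤ := (hint x R).2
  have hb₁ : ∀ (x : X) (R : ℝ), ν₁ (closedBall x R) < ⊤ := hb f fun y => by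
    simp only [← enorm_eq_nnnorm, Real.enorm_eq_ofReal_abs]; exact ENNReal.ofReal_le_ofReal (le_abs_self _)
  have hb₂ : ∀ (x : X) (R : ℝ), ν₂ (closedBall x R) < ⊤ := hb (fun y => -f y) fun y => by
    simp only [← enorm_eq_nnnorm, Real.enorm_eq_ofReal_abs]; exact ENNReal.ofReal_le_ofReal (neg_le_abs _)
  have key : avgOp μ r f = fun x => (μ (closedBall x r)).toReal⁻¹ *
      ((ν₁ (closedBall x r)).toReal - (ν₂ (closedBall x r)).toReal) := by
    funext x
    rw [avgOp, integral_eq_lintegral_pos_part_sub_lintegral_neg_part (hint x r),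
      hν₁, hν₂, withDensity_apply _ measurableSet_closedBall,
      withDensity_apply _ measurableSet_closedBall]
  rw [key]
  exact ((aux_measurable_measure_closedBall μ hμb r).ennreal_toReal.inv).mul
    (((aux_measurable_measure_closedBall ν₁ hb₁ r).ennreal_toReal).sub
      ((aux_measurable_measure_closedBall ν₂ hb₂ r).ennreal_toReal))

lemma aux_tendsto_eLpNorm_zero {μ : Measure X} {p : ℝ≥0∞} (hp0 : p ≠ 0) (hp2 : p ≠ ⊤)
    {ι : Type*} {l : Filter ι} [l.IsCountablyGenerated] {F : ι → X → ℝ}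
    (hFm : ∀ i, Measurable (F i)) (bound : X → ℝ≥0∞)
    (hbound : ∫⁻ x, bound x ∂μ ≠ ⊤)
    (hle : ∀ᶠ i in l, ∀ x, (‖F i x‖₊ : ℝ≥0∞) ^ p.toReal ≤ bound x)
    (hlim : ∀ x, Tendsto (fun i => F i x) l (𝓝 0)) :
    Tendsto (fun i => eLpNorm (F i) p μ) l (𝓝 0) := by
  have hpt : 0 < p.toReal := ENNReal.toReal_pos hp0 hp2
  have h1 : Tendsto (fun i => ∫⁻ x, (‖F i x‖₊ : ℝ≥0∞) ^ p.toReal ∂μ) l (𝓝 0) := by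
    have h0 : (∫⁻ _x, (0:ℝ≥0∞) ∂μ) = 0 := lintegral_zero
    rw [← h0]
    refine tendsto_lintegral_filter_of_dominated_convergence bound
      (Eventually.of_forall fun i =>
        (ENNReal.continuous_rpow_const (y := p.toReal)).measurable.comp (hFm i).enorm)
      (hle.mono fun i hi => Eventually.of_forall hi) hbound
      (Eventually.of_forall fun x => ?_)
    have h2 : Tendsto (fun i => (‖F i x‖₊ : ℝ≥0∞)) l (𝓝 0) := by
      have h3 := ((ENNReal.continuous_coe.comp continuous_nnnorm).tendsto (0:ℝ)).comp (hlim x)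
      simpa [Function.comp_def] using h3
    have h4 := ((ENNReal.continuous_rpow_const (y := p.toReal)).tendsto (0:ℝ≥0∞)).comp h2
    rw [ENNReal.zero_rpow_of_pos hpt] at h4
    exact h4
  have h4 := ((ENNReal.continuous_rpow_const (y := 1 / p.toReal)).tendsto (0:ℝ≥0∞)).comp h1
  rw [ENNReal.zero_rpow_of_pos (by positivity : 0 < 1 / p.toReal)] at h4
  refine Tendsto.congr (fun i => ?_) h4
  rw [Function.comp_apply, eLpNorm_eq_lintegral_rpow_enorm_toReal hp0 hp2]; rfl

lemma aux_tendsto_avg {μ : Measure X}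
    (hfin : ∀ s : Set X, Bornology.IsBounded s → μ s < ⊤)
    (hpos : ∀ U : Set X, IsOpen U → U.Nonempty → 0 < μ U)
    {p : ℝ≥0∞} (hp1 : 1 ≤ p) {g : X → ℝ} (hg : MemLp g p μ) (hgc : Continuous g) (x : X) :
    Tendsto (fun r => avgOp μ r g x - g x) (𝓝[>] (0:ℝ)) (𝓝 0) := by
  rw [Metric.tendsto_nhdsWithin_nhds]
  intro ε hε
  obtain ⟨δ, hδ, hδ'⟩ := Metric.continuous_iff.mp hgc x (ε/2) (by linarith)
  refine ⟨δ, hδ, ?_⟩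
  intro r hr hrδ
  rw [Real.dist_eq, sub_zero, abs_of_pos hr] at hrδ
  set B := closedBall x r with hB
  have hBfin : μ B < ⊤ := hfin _ isBounded_closedBall
  have hBpos : 0 < μ B := lt_of_lt_of_le (hpos _ isOpen_ball ⟨x, mem_ball_self hr⟩)
    (measure_mono ball_subset_closedBall)
  have htR : (μ B).toReal ≠ 0 := by
    simp [ENNReal.toReal_eq_zero_iff, hBpos.ne', hBfin.ne]
  have htRpos : 0 < (μ B).toReal := lt_of_le_of_ne ENNReal.toReal_nonneg (Ne.symm htR)
  have hint : IntegrableOn g B μ := aux_integrableOn hp1 hg hBfin.ne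
  have hconst : IntegrableOn (fun _ => g x) B μ := integrableOn_const hBfin.ne
  have hcalc : avgOp μ r g x - g x = (μ B).toReal⁻¹ * ∫ y in B, (g y - g x) ∂μ := by
    rw [integral_sub hint hconst, setIntegral_const, smul_eq_mul, avgOp, measureReal_def, ← hB]
    field_simp
  rw [dist_zero_right, hcalc]
  have hbound : ‖∫ y in B, (g y - g x) ∂μ‖ ≤ (ε/2) * (μ B).toReal := by
    apply norm_setIntegral_le_of_norm_le_const hBfin
    intro y hy
    have hd : dist y x < δ := lt_of_le_of_lt (mem_closedBall.mp hy) hrδ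
    have := hδ' y hd
    rw [Real.norm_eq_abs, ← Real.dist_eq]
    exact this.le
  calc ‖(μ B).toReal⁻¹ * ∫ y in B, (g y - g x) ∂μ‖
      = (μ B).toReal⁻¹ * ‖∫ y in B, (g y - g x) ∂μ‖ := by
        rw [norm_mul, Real.norm_eq_abs, abs_of_nonneg (by positivity)]
    _ ≤ (μ B).toReal⁻¹ * ((ε/2) * (μ B).toReal) := by
        apply mul_le_mul_of_nonneg_left hbound (by positivity)
    _ = ε/2 := by field_simp
    _ < ε := by linarith

end Aux

/-- If the averaging operators `A_r` are uniformly bounded on `L^p(μ)`, `1 ≤ p < ∞`,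
then for every `f ∈ L^p(μ)` the averages `A_r f` converge to `f` in `L^p(μ)` as `r → 0`. -/
theorem stmt0 {X : Type*} [MetricSpace X] [MeasurableSpace X] [BorelSpace X]
    (μ : Measure X)
    (hfin : ∀ s : Set X, Bornology.IsBounded s → μ s < ⊤)
    (hpos : ∀ U : Set X, IsOpen U → U.Nonempty → 0 < μ U)
    (p : ℝ≥0∞) (hp1 : 1 ≤ p) (hp2 : p ≠ ⊤)
    (C : ℝ) (hC : 0 < C)
    (hbd : ∀ r : ℝ, 0 < r → ∀ f : X → ℝ, MemLp f p μ →
      eLpNorm (avgOp μ r f) p μ ≤ ENNReal.ofReal C * eLpNorm f p μ) :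
    ∀ f : X → ℝ, MemLp f p μ →
      Tendsto (fun r : ℝ => eLpNorm (fun x => avgOp μ r f x - f x) p μ)
        (𝓝[>] (0 : ℝ)) (𝓝 0) := by
  have hp0 : p ≠ 0 := fun h => by simp [h] at hp1
  intro f hf
  rcases isEmpty_or_nonempty X with hX | hX
  · have hμ0 : μ = 0 := by
      ext s _
      simp [Set.eq_empty_of_isEmpty s]
    subst hμ0
    simp only [eLpNorm_measure_zero]
    exact tendsto_const_nhds
  obtain ⟨x₀⟩ := hX
  -- μ is outer regular, hence weakly regular
  haveI houter : μ.OuterRegular := by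
    refine Measure.FiniteSpanningSetsIn.outerRegular
      ⟨fun n => ball x₀ (n+1), fun n => ⟨isOpen_ball, ?_⟩,
        fun n => hfin _ isBounded_ball, ?_⟩
    · haveI : IsFiniteMeasure (μ.restrict (ball x₀ (n+1))) :=
        ⟨by rw [Measure.restrict_apply_univ]; exact hfin _ isBounded_ball⟩
      infer_instance
    · rw [Set.iUnion_eq_univ_iff]
      intro x
      obtain ⟨n, hn⟩ := exists_nat_gt (dist x x₀)
      exact ⟨n, mem_ball.mpr (by push_cast; linarith)⟩
  haveI : μ.WeaklyRegular :=
    { toOuterRegular := houter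
      innerRegular := MeasureTheory.Measure.InnerRegularWRT.of_pseudoMetrizableSpace μ }
  -- reduce to showing eventual smallness
  rw [ENNReal.tendsto_nhds_zero]
  suffices h : ∀ ε : ℝ≥0∞, 0 < ε → ε ≠ ⊤ →
      ∀ᶠ r in 𝓝[>] (0:ℝ), eLpNorm (fun x => avgOp μ r f x - f x) p μ ≤ ε by
    intro ε hε
    have hmin : (0:ℝ≥0∞) < min ε 1 := lt_min hε zero_lt_one
    have hne : min ε 1 ≠ ⊤ := ne_top_of_le_ne_top ENNReal.one_ne_top (min_le_right _ _)
    exact (h (min ε 1) hmin hne).mono fun r hr => hr.trans (min_le_left _ _)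
  intro ε hε hεtop
  have hεR : 0 < ε.toReal := ENNReal.toReal_pos hε.ne' hεtop
  set η : ℝ := ε.toReal / (8 * (C + 1)) with hη_def
  have hη : 0 < η := by positivity
  -- Step A: bounded continuous approximation
  obtain ⟨g₀, hg₀close, hg₀mem⟩ :=
    hf.exists_boundedContinuous_eLpNorm_sub_le hp2
      (show ENNReal.ofReal η ≠ 0 from (ENNReal.ofReal_pos.mpr hη).ne')
  -- Step B: cutoff
  set χ : ℕ → X → ℝ := fun n y => min 1 (max 0 ((n:ℝ) + 1 - dist y x₀)) with hχ_def
  have hχcont : ∀ n, Continuous (χ n) := fun n =>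
    continuous_const.min (continuous_const.max
      (continuous_const.sub (continuous_id.dist continuous_const)))
  have hχ01 : ∀ n y, 0 ≤ χ n y ∧ χ n y ≤ 1 := fun n y =>
    ⟨le_min zero_le_one (le_max_left _ _), min_le_left _ _⟩
  have hχ1 : ∀ (n : ℕ) (y : X), dist y x₀ ≤ (n:ℝ) → χ n y = 1 := by
    intro n y hy
    show min 1 (max 0 ((n:ℝ) + 1 - dist y x₀)) = 1
    have h1 : (1:ℝ) ≤ max 0 ((n:ℝ) + 1 - dist y x₀) := le_max_of_le_right (by linarith)
    exact min_eq_left h1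
  have hχ0 : ∀ (n : ℕ) (y : X), (n:ℝ) + 1 ≤ dist y x₀ → χ n y = 0 := by
    intro n y hy
    show min 1 (max 0 ((n:ℝ) + 1 - dist y x₀)) = 0
    rw [max_eq_left (by linarith : (n:ℝ) + 1 - dist y x₀ ≤ 0), min_eq_right zero_le_one]
  -- choose n
  have hBtend : Tendsto (fun n : ℕ => eLpNorm (fun y => g₀ y - g₀ y * χ n y) p μ)
      atTop (𝓝 0) := by
    refine aux_tendsto_eLpNorm_zero hp0 hp2
      (fun n => (g₀.continuous.measurable).sub
        ((g₀.continuous.measurable).mul (hχcont n).measurable))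
      (fun y => (‖g₀ y‖₊ : ℝ≥0∞) ^ p.toReal) ?_ ?_ ?_
    · exact (lintegral_rpow_enorm_lt_top_of_eLpNorm_lt_top hp0 hp2 hg₀mem.2).ne
    · refine Eventually.of_forall fun n => fun y => ?_
      refine ENNReal.rpow_le_rpow ?_ ENNReal.toReal_nonneg
      simp only [← enorm_eq_nnnorm, Real.enorm_eq_ofReal_abs]
      apply ENNReal.ofReal_le_ofReal
      have heq : g₀ y - g₀ y * χ n y = g₀ y * (1 - χ n y) := by ring
      rw [heq, abs_mul]
      have h01 := hχ01 n y
      have habs1 : |1 - χ n y| ≤ 1 := by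
        rw [abs_le]; constructor <;> [linarith [h01.2]; linarith [h01.1]]
      calc |g₀ y| * |1 - χ n y| ≤ |g₀ y| * 1 :=
            mul_le_mul_of_nonneg_left habs1 (abs_nonneg _)
        _ = |g₀ y| := mul_one _
    · intro y
      obtain ⟨N, hN⟩ := exists_nat_gt (dist y x₀)
      refine tendsto_atTop_of_eventually_const (i₀ := N) fun n hn => ?_
      have : dist y x₀ ≤ (n:ℝ) := le_trans hN.le (by exact_mod_cast hn)
      rw [hχ1 n y this, mul_one, sub_self]
  obtain ⟨n, hn⟩ := (hBtend.eventually_lt_const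
    (show (0:ℝ≥0∞) < ENNReal.ofReal η from ENNReal.ofReal_pos.mpr hη)).exists
  set g : X → ℝ := fun y => g₀ y * χ n y with hg_def
  have hgc : Continuous g := g₀.continuous.mul (hχcont n)
  have hgle : ∀ y, ‖g y‖ ≤ ‖g₀ y‖ := by
    intro y
    rw [Real.norm_eq_abs, Real.norm_eq_abs]
    show |g₀ y * χ n y| ≤ |g₀ y|
    rw [abs_mul]
    have h01 := hχ01 n y
    have habs1 : |χ n y| ≤ 1 := by rw [abs_le]; constructor <;> linarith [h01.1, h01.2]
    calc |g₀ y| * |χ n y| ≤ |g₀ y| * 1 := mul_le_mul_of_nonneg_left habs1 (abs_nonneg _)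
      _ = |g₀ y| := mul_one _
  have hgmem : MemLp g p μ :=
    hg₀mem.of_le hgc.aestronglyMeasurable (Eventually.of_forall hgle)
  set M : ℝ := ‖g₀‖ with hM_def
  have hM0 : 0 ≤ M := norm_nonneg _
  have hMnorm : ∀ y, ‖g y‖ ≤ M := fun y => (hgle y).trans (g₀.norm_coe_le_norm y)
  have hgsupp : ∀ y, (n:ℝ) + 1 ≤ dist y x₀ → g y = 0 := by
    intro y hy
    show g₀ y * χ n y = 0
    rw [hχ0 n y hy, mul_zero]
  have h_fg : eLpNorm (fun y => f y - g y) p μ ≤ ENNReal.ofReal η + ENNReal.ofReal η := by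
    have hsplit : (fun y => f y - g y) =
        (fun y => f y - g₀ y) + fun y => g₀ y - g y := by
      funext y; simp [Pi.add_apply]
    rw [hsplit]
    refine le_trans (eLpNorm_add_le (hf.sub hg₀mem).aestronglyMeasurable
      (hg₀mem.sub hgmem).aestronglyMeasurable hp1) ?_
    exact add_le_add hg₀close hn.le
  have hint_f : ∀ (x : X) (R : ℝ), IntegrableOn f (closedBall x R) μ :=
    fun x R => aux_integrableOn hp1 hf (hfin _ isBounded_closedBall).ne
  have hint_g : ∀ (x : X) (R : ℝ), IntegrableOn g (closedBall x R) μ :=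
    fun x R => aux_integrableOn hp1 hgmem (hfin _ isBounded_closedBall).ne
  have hint_fg : ∀ (x : X) (R : ℝ),
      IntegrableOn (fun y => f y - g y) (closedBall x R) μ :=
    fun x R => (hint_f x R).sub (hint_g x R)
  have hpt : 0 < p.toReal := ENNReal.toReal_pos hp0 hp2
  have hmid : Tendsto (fun r => eLpNorm (fun x => avgOp μ r g x - g x) p μ)
      (𝓝[>] (0:ℝ)) (𝓝 0) := by
    refine aux_tendsto_eLpNorm_zero hp0 hp2
      (fun r => (aux_measurable_avgOp hfin hint_g r).sub hgc.measurable)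
      ((closedBall x₀ ((n:ℝ) + 2)).indicator fun _ => ENNReal.ofReal (2*M) ^ p.toReal)
      ?_ ?_ ?_
    · rw [lintegral_indicator measurableSet_closedBall, setLIntegral_const]
      exact (ENNReal.mul_lt_top
        (ENNReal.rpow_lt_top_of_nonneg hpt.le ENNReal.ofReal_ne_top)
        (hfin _ isBounded_closedBall)).ne
    · filter_upwards [Ioc_mem_nhdsGT_of_mem
        (Set.mem_Ico.mpr ⟨le_refl (0:ℝ), zero_lt_one⟩)] with r hr x
      obtain ⟨hr0, hr1⟩ := hr
      by_cases hx : dist x x₀ ≤ (n:ℝ) + 2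
      · have hBfin : μ (closedBall x r) < ⊤ := hfin _ isBounded_closedBall
        have hBpos : 0 < μ (closedBall x r) :=
          lt_of_lt_of_le (hpos _ isOpen_ball ⟨x, mem_ball_self hr0⟩)
            (measure_mono ball_subset_closedBall)
        have htR : (μ (closedBall x r)).toReal ≠ 0 := by
          simp [ENNReal.toReal_eq_zero_iff, hBpos.ne', hBfin.ne]
        have havg : |avgOp μ r g x| ≤ M := by
          rw [avgOp, abs_mul, abs_of_nonneg (inv_nonneg.mpr ENNReal.toReal_nonneg)]
          have h2 : ‖∫ y in closedBall x r, g y ∂μ‖ ≤ M * (μ (closedBall x r)).toReal :=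
            norm_setIntegral_le_of_norm_le_const hBfin
              fun y _ => hMnorm y
          rw [Real.norm_eq_abs] at h2
          calc (μ (closedBall x r)).toReal⁻¹ * |∫ y in closedBall x r, g y ∂μ|
              ≤ (μ (closedBall x r)).toReal⁻¹ * (M * (μ (closedBall x r)).toReal) :=
                mul_le_mul_of_nonneg_left h2 (by positivity)
            _ = M := by field_simp
        have habs : |avgOp μ r g x - g x| ≤ 2 * M := by
          have h3 : ‖g x‖ ≤ M := hMnorm x
          rw [Real.norm_eq_abs] at h3
          have h4 := abs_sub (avgOp μ r g x) (g x)
          linarith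
        rw [Set.indicator_of_mem (mem_closedBall.mpr hx)]; simp only [← enorm_eq_nnnorm, Real.enorm_eq_ofReal_abs]
        exact ENNReal.rpow_le_rpow (ENNReal.ofReal_le_ofReal habs) hpt.le
      · push_neg at hx
        have hgx : g x = 0 := hgsupp x (by linarith)
        have hzero : ∀ y ∈ closedBall x r, g y = 0 := by
          intro y hy
          apply hgsupp
          have h1 : dist y x ≤ r := mem_closedBall.mp hy
          have h2 : dist x x₀ ≤ dist x y + dist y x₀ := dist_triangle x y x₀
          have h3 : dist x y = dist y x := dist_comm x y
          linarith
        have hz : avgOp μ r g x - g x = 0 := by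
          rw [avgOp, setIntegral_eq_zero_of_forall_eq_zero hzero, mul_zero, hgx, sub_zero]
        rw [hz]
        simp [ENNReal.zero_rpow_of_pos hpt]
    · exact fun x => aux_tendsto_avg hfin hpos hp1 hgmem hgc x
  have hmid2 : ∀ᶠ r in 𝓝[>] (0:ℝ),
      eLpNorm (fun x => avgOp μ r g x - g x) p μ ≤ ε/2 :=
    (hmid.eventually_lt_const (ENNReal.half_pos hε.ne')).mono fun r hr => hr.le
  have harith : ENNReal.ofReal C * (ENNReal.ofReal η + ENNReal.ofReal η) +
      (ENNReal.ofReal η + ENNReal.ofReal η) ≤ ε/2 := by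
    rw [← ENNReal.ofReal_add hη.le hη.le, ← ENNReal.ofReal_mul hC.le,
      ← ENNReal.ofReal_add (by positivity) (by positivity)]
    have heq : C * (η + η) + (η + η) = ε.toReal / 4 := by
      rw [hη_def]; field_simp; ring
    rw [heq]
    have h2 : ε/2 = ENNReal.ofReal (ε.toReal/2) := by
      rw [ENNReal.ofReal_div_of_pos two_pos, ENNReal.ofReal_toReal hεtop]
      norm_num
    rw [h2]
    exact ENNReal.ofReal_le_ofReal (by linarith)
  filter_upwards [hmid2, self_mem_nhdsWithin] with r hr1 hr2
  have hr0 : (0:ℝ) < r := hr2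
  have hdecomp : (fun x => avgOp μ r f x - f x) =
      (fun x => avgOp μ r (fun y => f y - g y) x) +
        ((fun x => avgOp μ r g x - g x) + fun x => g x - f x) := by
    funext x
    simp only [Pi.add_apply]
    have hsub : avgOp μ r (fun y => f y - g y) x = avgOp μ r f x - avgOp μ r g x := by
      rw [avgOp, avgOp, avgOp, integral_sub (hint_f x r) (hint_g x r)]; ring
    rw [hsub]; ring
  have h3rd : eLpNorm (fun x => g x - f x) p μ ≤ ENNReal.ofReal η + ENNReal.ofReal η := by
    have hcomm : eLpNorm (fun x => g x - f x) p μ = eLpNorm (fun y => f y - g y) p μ :=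
      eLpNorm_sub_comm g f p μ
    rw [hcomm]; exact h_fg
  calc eLpNorm (fun x => avgOp μ r f x - f x) p μ
      ≤ eLpNorm (fun x => avgOp μ r (fun y => f y - g y) x) p μ +
        eLpNorm ((fun x => avgOp μ r g x - g x) + fun x => g x - f x) p μ := by
        rw [hdecomp]
        exact eLpNorm_add_le
          (aux_measurable_avgOp hfin hint_fg r).aestronglyMeasurable
          (((aux_measurable_avgOp hfin hint_g r).sub
              hgc.measurable).aestronglyMeasurable.add
            (hgmem.aestronglyMeasurable.sub hf.aestronglyMeasurable)) hp1
    _ ≤ ENNReal.ofReal C * (ENNReal.ofReal η + ENNReal.ofReal η) +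
        (ε/2 + (ENNReal.ofReal η + ENNReal.ofReal η)) := by
        refine add_le_add ?_ ?_
        · exact le_trans (hbd r hr0 _ (hf.sub hgmem)) (mul_le_mul_right h_fg _)
        · refine le_trans (eLpNorm_add_le
            ((aux_measurable_avgOp hfin hint_g r).sub
              hgc.measurable).aestronglyMeasurable
            (hgmem.aestronglyMeasurable.sub hf.aestronglyMeasurable) hp1) ?_
          exact add_le_add hr1 h3rd
    _ = ε/2 + (ENNReal.ofReal C * (ENNReal.ofReal η + ENNReal.ofReal η) +
        (ENNReal.ofReal η + ENNReal.ofReal η)) := by ring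
    _ ≤ ε/2 + ε/2 := add_le_add_right harith _
    _ = ε := ENNReal.add_halves ε
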